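/- Let B be a von Neumann algebra on a complex Hilbert space G, let E ⊆ B(G,H) be a concrete von Neumann B-module, and let A = {a ∈ B(H) : a∘x ∈ E and a*∘x ∈ E for all x ∈ E}. On the Hilbert space direct sum G ⊕ H, let M be the set of all operators of the form (g,h) ↦ (b g + y* h, x g + a h) with b ∈ B, x, y ∈ E, a ∈ A (the linking algebra of E). Then an operator S ∈ B(G ⊕ H) commutes with every element of M if and only if there exist b' ∈ B' and c ∈ B(H) with c ∘ x = x ∘ b' for all x ∈ E such that S(g,h) = (b' g, c h) for all g ∈ G, h ∈ H. -/

import Mathlib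

noncomputable section

variable {G H K : Type*}
  [NormedAddCommGroup G] [InnerProductSpace ℂ G] [CompleteSpace G]
  [NormedAddCommGroup H] [InnerProductSpace ℂ H] [CompleteSpace H]
  [NormedAddCommGroup K] [InnerProductSpace ℂ K] [CompleteSpace K]

/-- The weak operator topology on `G →L[ℂ] H`: the coarsest topology making all the maps
`T ↦ ⟨h, T g⟩` continuous. -/
def wot (G H : Type*) [NormedAddCommGroup G] [InnerProductSpace ℂ G]
    [NormedAddCommGroup H] [InnerProductSpace ℂ H] : TopologicalSpace (G →L[ℂ] H) :=
  ⨅ p : G × H, TopologicalSpace.induced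
    (fun T : G →L[ℂ] H => (inner ℂ p.2 (T p.1) : ℂ)) inferInstance

/-- The set `{x g : x ∈ E, g ∈ G}` spans a dense subspace of `H`. -/
def SpansDensely (E : Set (G →L[ℂ] H)) : Prop :=
  Dense ((Submodule.span ℂ {h : H | ∃ x ∈ E, ∃ g : G, x g = h} : Submodule ℂ H) : Set H)

/-- `E ⊆ B(G,H)` is a concrete von Neumann `B`-module: a complex linear subspace, stable under
composition with elements of `B` from the right, with `x* ∘ y ∈ B` for all `x, y ∈ E`, acting
nondegenerately on `G`, and closed in the weak operator topology. -/
structure IsConcreteVNModule (B : VonNeumannAlgebra G) (E : Set (G →L[ℂ] H)) : Prop where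
  zero_mem : (0 : G →L[ℂ] H) ∈ E
  add_mem : ∀ x ∈ E, ∀ y ∈ E, x + y ∈ E
  smul_mem : ∀ (c : ℂ), ∀ x ∈ E, c • x ∈ E
  comp_mem : ∀ x ∈ E, ∀ b ∈ B, x.comp b ∈ E
  adjoint_comp_mem : ∀ x ∈ E, ∀ y ∈ E, (ContinuousLinearMap.adjoint x).comp y ∈ B
  dense : SpansDensely E
  isClosed : @IsClosed _ (wot G H) E

/-- A map `ρ : B(G) → B(H)` restricts on the subset `S ⊆ B(G)` to a normal unital
`*`-homomorphism: it is linear, multiplicative and star-preserving on `S`, unital, and its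
restriction to the closed unit ball of `S` is continuous from the weak operator topology of
`B(G)` to the weak operator topology of `B(H)`. -/
structure IsNormalUnitalStarHom (S : Set (G →L[ℂ] G)) (ρ : (G →L[ℂ] G) → (H →L[ℂ] H)) :
    Prop where
  map_add : ∀ a ∈ S, ∀ b ∈ S, ρ (a + b) = ρ a + ρ b
  map_smul : ∀ (c : ℂ), ∀ a ∈ S, ρ (c • a) = c • ρ a
  map_mul : ∀ a ∈ S, ∀ b ∈ S, ρ (a * b) = ρ a * ρ b
  map_star : ∀ a ∈ S, ρ (star a) = star (ρ a)
  map_one : ρ 1 = 1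
  normal : @Continuous {b : G →L[ℂ] G // b ∈ S ∧ ‖b‖ ≤ 1} (H →L[ℂ] H)
    (TopologicalSpace.induced (fun b => b.1) (wot G G)) (wot H H) (fun b => ρ b.1)

/-- The space of intertwiners: `x ∈ B(G,H)` with `ρ(b') ∘ x = x ∘ b'` for all `b' ∈ S`. -/
def intertwinerSpace (S : Set (G →L[ℂ] G)) (ρ : (G →L[ℂ] G) → (H →L[ℂ] H)) :
    Set (G →L[ℂ] H) :=
  {x | ∀ b' ∈ S, (ρ b').comp x = x.comp b'}

/-- The operator `(g,h) ↦ (b g + c h, x g + a h)` on the Hilbert direct sum `G ⊕ H`. -/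
def blockOp (b : G →L[ℂ] G) (c : H →L[ℂ] G) (x : G →L[ℂ] H) (a : H →L[ℂ] H) :
    WithLp 2 (G × H) →L[ℂ] WithLp 2 (G × H) :=
  (((WithLp.prodContinuousLinearEquiv 2 ℂ G H).symm : G × H →L[ℂ] WithLp 2 (G × H)).comp
      (((b.comp (ContinuousLinearMap.fst ℂ G H) + c.comp (ContinuousLinearMap.snd ℂ G H)).prod
        (x.comp (ContinuousLinearMap.fst ℂ G H) +
          a.comp (ContinuousLinearMap.snd ℂ G H))))).comp
    ((WithLp.prodContinuousLinearEquiv 2 ℂ G H : WithLp 2 (G × H) ≃L[ℂ] G × H) :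
      WithLp 2 (G × H) →L[ℂ] G × H)

section Stmt12Aux

open ContinuousLinearMap

private lemma blockOp_apply (b : G →L[ℂ] G) (c : H →L[ℂ] G) (x : G →L[ℂ] H) (a : H →L[ℂ] H)
    (v : WithLp 2 (G × H)) :
    blockOp b c x a v = (WithLp.prodContinuousLinearEquiv 2 ℂ G H).symm
      (b ((WithLp.prodContinuousLinearEquiv 2 ℂ G H) v).1
        + c ((WithLp.prodContinuousLinearEquiv 2 ℂ G H) v).2,
       x ((WithLp.prodContinuousLinearEquiv 2 ℂ G H) v).1
        + a ((WithLp.prodContinuousLinearEquiv 2 ℂ G H) v).2) := rfl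

private lemma blockOp_apply' (b : G →L[ℂ] G) (c : H →L[ℂ] G) (x : G →L[ℂ] H) (a : H →L[ℂ] H)
    (g : G) (h : H) :
    blockOp b c x a ((WithLp.prodContinuousLinearEquiv 2 ℂ G H).symm (g, h))
      = (WithLp.prodContinuousLinearEquiv 2 ℂ G H).symm (b g + c h, x g + a h) := by
  rw [blockOp_apply, ContinuousLinearEquiv.apply_symm_apply]

private lemma blockOp_mul (b1 b2 : G →L[ℂ] G) (c1 c2 : H →L[ℂ] G) (x1 x2 : G →L[ℂ] H)
    (a1 a2 : H →L[ℂ] H) :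
    blockOp b1 c1 x1 a1 * blockOp b2 c2 x2 a2 =
      blockOp (b1 ∘L b2 + c1 ∘L x2) (b1 ∘L c2 + c1 ∘L a2)
        (x1 ∘L b2 + a1 ∘L x2) (x1 ∘L c2 + a1 ∘L a2) := by
  ext v
  simp only [ContinuousLinearMap.mul_apply, blockOp_apply,
    ContinuousLinearEquiv.apply_symm_apply, add_apply, coe_comp', Function.comp_apply,
    map_add]
  congr 1
  apply Prod.ext <;> simp <;> abel

private lemma blockOp_inj {b1 b2 : G →L[ℂ] G} {c1 c2 : H →L[ℂ] G} {x1 x2 : G →L[ℂ] H}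
    {a1 a2 : H →L[ℂ] H} (heq : blockOp b1 c1 x1 a1 = blockOp b2 c2 x2 a2) :
    b1 = b2 ∧ c1 = c2 ∧ x1 = x2 ∧ a1 = a2 := by
  have h1 : ∀ g : G, ((b1 g, x1 g) : G × H) = (b2 g, x2 g) := by
    intro g
    have h0 := ContinuousLinearMap.ext_iff.1 heq
      ((WithLp.prodContinuousLinearEquiv 2 ℂ G H).symm (g, 0))
    rw [blockOp_apply', blockOp_apply'] at h0
    have h1 := (WithLp.prodContinuousLinearEquiv 2 ℂ G H).symm.injective h0
    simpa using h1
  have h2 : ∀ h : H, ((c1 h, a1 h) : G × H) = (c2 h, a2 h) := by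
    intro h
    have h0 := ContinuousLinearMap.ext_iff.1 heq
      ((WithLp.prodContinuousLinearEquiv 2 ℂ G H).symm (0, h))
    rw [blockOp_apply', blockOp_apply'] at h0
    have h1 := (WithLp.prodContinuousLinearEquiv 2 ℂ G H).symm.injective h0
    simpa using h1
  refine ⟨?_, ?_, ?_, ?_⟩ <;> ext v
  · exact congrArg Prod.fst (h1 v)
  · exact congrArg Prod.fst (h2 v)
  · exact congrArg Prod.snd (h1 v)
  · exact congrArg Prod.snd (h2 v)

private lemma dense_vec_zero {E : Set (G →L[ℂ] H)} (hd : SpansDensely E)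
    (w : H) (hw : ∀ x ∈ E, ∀ g : G, (inner ℂ (x g) w : ℂ) = 0) : w = 0 := by
  have hz : (innerSL ℂ w : H →L[ℂ] ℂ) = 0 := by
    apply ContinuousLinearMap.ext_on hd
    rintro h ⟨x, hx, g, rfl⟩
    have : (inner ℂ w (x g) : ℂ) = 0 := by
      rw [← inner_conj_symm, hw x hx g, map_zero]
    simpa [innerSL_apply_apply] using this
  have : (inner ℂ w w : ℂ) = 0 := by
    have := ContinuousLinearMap.ext_iff.1 hz w
    simpa [innerSL_apply_apply] using this
  exact inner_self_eq_zero.1 this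

end Stmt12Aux

/-- an operator `S` on `G ⊕ H` commutes with every element of the linking
algebra of a concrete von Neumann `B`-module `E` if and only if it is diagonal, of the form
`(g,h) ↦ (b' g, c h)` with `b' ∈ B'` and `c ∘ x = x ∘ b'` for all `x ∈ E`. -/
theorem stmt12 (B : VonNeumannAlgebra G) (E : Set (G →L[ℂ] H))
    (hE : IsConcreteVNModule B E)
    (S : WithLp 2 (G × H) →L[ℂ] WithLp 2 (G × H)) :
    (∀ b ∈ B, ∀ x ∈ E, ∀ y ∈ E, ∀ a : H →L[ℂ] H,
        (∀ z ∈ E, a.comp z ∈ E ∧ (ContinuousLinearMap.adjoint a).comp z ∈ E) →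
        S * blockOp b (ContinuousLinearMap.adjoint y) x a
          = blockOp b (ContinuousLinearMap.adjoint y) x a * S)
      ↔ ∃ b' ∈ B.commutant, ∃ c : H →L[ℂ] H,
          (∀ x ∈ E, c.comp x = x.comp b') ∧ S = blockOp b' 0 0 c := by
  have h0A : ∀ z ∈ E, (0 : H →L[ℂ] H).comp z ∈ E ∧
      (ContinuousLinearMap.adjoint (0 : H →L[ℂ] H)).comp z ∈ E := by
    intro z hz
    constructor <;>
      simp [ContinuousLinearMap.zero_comp, hE.zero_mem, map_zero]
  have hadj0 : ContinuousLinearMap.adjoint (0 : G →L[ℂ] H) = 0 := map_zero _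
  constructor
  · intro hcom
    set b' : G →L[ℂ] G := (ContinuousLinearMap.fst ℂ G H).comp
      ((((WithLp.prodContinuousLinearEquiv 2 ℂ G H : WithLp 2 (G × H) ≃L[ℂ] G × H) :
          WithLp 2 (G × H) →L[ℂ] G × H).comp S).comp
        (((WithLp.prodContinuousLinearEquiv 2 ℂ G H).symm :
          G × H →L[ℂ] WithLp 2 (G × H)).comp (ContinuousLinearMap.inl ℂ G H))) with hb'def
    set c : H →L[ℂ] H := (ContinuousLinearMap.snd ℂ G H).comp
      ((((WithLp.prodContinuousLinearEquiv 2 ℂ G H : WithLp 2 (G × H) ≃L[ℂ] G × H) :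
          WithLp 2 (G × H) →L[ℂ] G × H).comp S).comp
        (((WithLp.prodContinuousLinearEquiv 2 ℂ G H).symm :
          G × H →L[ℂ] WithLp 2 (G × H)).comp (ContinuousLinearMap.inr ℂ G H))) with hcdef
    have hb'g : ∀ g : G, b' g = ((WithLp.prodContinuousLinearEquiv 2 ℂ G H)
        (S ((WithLp.prodContinuousLinearEquiv 2 ℂ G H).symm (g, 0)))).1 := fun g => rfl
    have hch : ∀ h : H, c h = ((WithLp.prodContinuousLinearEquiv 2 ℂ G H)
        (S ((WithLp.prodContinuousLinearEquiv 2 ℂ G H).symm (0, h)))).2 := fun h => rfl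
    have hP := hcom 1 (one_mem B) 0 hE.zero_mem 0 hE.zero_mem 0 h0A
    rw [hadj0] at hP
    have key : ∀ (g : G) (h : H),
        S ((WithLp.prodContinuousLinearEquiv 2 ℂ G H).symm (g, 0))
          = (WithLp.prodContinuousLinearEquiv 2 ℂ G H).symm
              (((WithLp.prodContinuousLinearEquiv 2 ℂ G H)
                (S ((WithLp.prodContinuousLinearEquiv 2 ℂ G H).symm (g, h)))).1, 0) := by
      intro g h
      have h0 := ContinuousLinearMap.ext_iff.1 hP
        ((WithLp.prodContinuousLinearEquiv 2 ℂ G H).symm (g, h))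
      simp only [ContinuousLinearMap.mul_apply, blockOp_apply', blockOp_apply,
        ContinuousLinearMap.one_apply, ContinuousLinearMap.zero_apply, add_zero,
        zero_add] at h0
      exact h0
    have k20 : ∀ h : H, ((WithLp.prodContinuousLinearEquiv 2 ℂ G H)
        (S ((WithLp.prodContinuousLinearEquiv 2 ℂ G H).symm (0, h)))).1 = 0 := by
      intro h
      have h0 := key 0 h
      have h1 := congrArg (WithLp.prodContinuousLinearEquiv 2 ℂ G H) h0
      rw [ContinuousLinearEquiv.apply_symm_apply] at h1
      have h2 : ((0 : G), (0 : H)) = (0 : G × H) := rfl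
      rw [h2, map_zero, map_zero, map_zero] at h1
      exact (congrArg Prod.fst h1).symm
    have hv : ∀ (g : G) (h : H),
        S ((WithLp.prodContinuousLinearEquiv 2 ℂ G H).symm (g, h))
          = (WithLp.prodContinuousLinearEquiv 2 ℂ G H).symm (b' g, c h) := by
      intro g h
      have hsplit : ((WithLp.prodContinuousLinearEquiv 2 ℂ G H).symm ((g, h) : G × H))
          = (WithLp.prodContinuousLinearEquiv 2 ℂ G H).symm (g, 0)
            + (WithLp.prodContinuousLinearEquiv 2 ℂ G H).symm (0, h) := by
        rw [← map_add]
        congr 1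
        simp [Prod.mk_add_mk]
      have k1 : S ((WithLp.prodContinuousLinearEquiv 2 ℂ G H).symm (g, 0))
          = (WithLp.prodContinuousLinearEquiv 2 ℂ G H).symm (b' g, 0) := by
        rw [hb'g g]; exact key g 0
      have k2 : S ((WithLp.prodContinuousLinearEquiv 2 ℂ G H).symm ((0 : G), h))
          = (WithLp.prodContinuousLinearEquiv 2 ℂ G H).symm (0, c h) := by
        have hp : ((WithLp.prodContinuousLinearEquiv 2 ℂ G H)
            (S ((WithLp.prodContinuousLinearEquiv 2 ℂ G H).symm (0, h)))) = ((0 : G), c h) := by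
          apply Prod.ext
          · exact k20 h
          · exact (hch h).symm
        calc S ((WithLp.prodContinuousLinearEquiv 2 ℂ G H).symm ((0 : G), h))
            = (WithLp.prodContinuousLinearEquiv 2 ℂ G H).symm
                ((WithLp.prodContinuousLinearEquiv 2 ℂ G H)
                  (S ((WithLp.prodContinuousLinearEquiv 2 ℂ G H).symm (0, h)))) := by
              rw [ContinuousLinearEquiv.symm_apply_apply]
          _ = (WithLp.prodContinuousLinearEquiv 2 ℂ G H).symm (0, c h) := by rw [hp]
      rw [hsplit, map_add, k1, k2, ← map_add]
      congr 1
      simp [Prod.mk_add_mk]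
    have hdiag : S = blockOp b' 0 0 c := by
      refine ContinuousLinearMap.ext fun v => ?_
      have h1 : v = (WithLp.prodContinuousLinearEquiv 2 ℂ G H).symm
          (((WithLp.prodContinuousLinearEquiv 2 ℂ G H) v).1,
           ((WithLp.prodContinuousLinearEquiv 2 ℂ G H) v).2) := by
        rw [Prod.mk.eta, ContinuousLinearEquiv.symm_apply_apply]
      conv_lhs => rw [h1]
      rw [hv, blockOp_apply]
      simp
    refine ⟨b', ?_, c, ?_, hdiag⟩
    · rw [VonNeumannAlgebra.mem_commutant_iff]
      intro b hb
      have hbb := hcom b hb 0 hE.zero_mem 0 hE.zero_mem 0 h0A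
      rw [hdiag, hadj0, blockOp_mul, blockOp_mul] at hbb
      have h1 := (blockOp_inj hbb).1
      simp only [ContinuousLinearMap.comp_zero, ContinuousLinearMap.zero_comp,
        add_zero, zero_add] at h1
      rw [ContinuousLinearMap.mul_def, ContinuousLinearMap.mul_def]
      exact h1.symm
    · intro x hx
      have hxx := hcom 0 (zero_mem B) x hx 0 hE.zero_mem 0 h0A
      rw [hdiag, hadj0, blockOp_mul, blockOp_mul] at hxx
      have h1 := (blockOp_inj hxx).2.2.1
      simp only [ContinuousLinearMap.comp_zero, ContinuousLinearMap.zero_comp,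
        add_zero, zero_add] at h1
      exact h1
  · rintro ⟨b', hb', c, hc, rfl⟩
    intro b hb x hx y hy a ha
    have hstar : star b' ∈ B.commutant := star_mem hb'
    have e1 : b' ∘L b = b ∘L b' := by
      have h1 := VonNeumannAlgebra.mem_commutant_iff.1 hb' b hb
      rw [ContinuousLinearMap.mul_def, ContinuousLinearMap.mul_def] at h1
      exact h1.symm
    have e3 : c ∘L x = x ∘L b' := hc x hx
    have key : (ContinuousLinearMap.adjoint c) ∘L y = y ∘L (star b') := by
      refine ContinuousLinearMap.ext fun g => ?_
      rw [← sub_eq_zero]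
      apply dense_vec_zero hE.dense
      intro z hz g'
      have hdB : (ContinuousLinearMap.adjoint z) ∘L y ∈ B := hE.adjoint_comp_mem z hz y hy
      have hcomm := VonNeumannAlgebra.mem_commutant_iff.1 hstar _ hdB
      simp only [ContinuousLinearMap.coe_comp', Function.comp_apply]
      rw [inner_sub_right]
      have t1 : (inner ℂ (z g') ((ContinuousLinearMap.adjoint c) (y g)) : ℂ)
          = inner ℂ (b' g') (((ContinuousLinearMap.adjoint z) ∘L y) g) := by
        rw [ContinuousLinearMap.adjoint_inner_right]
        have hz1 : c (z g') = z (b' g') := by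
          have := ContinuousLinearMap.ext_iff.1 (hc z hz) g'
          simpa using this
        rw [hz1, ContinuousLinearMap.coe_comp', Function.comp_apply,
          ← ContinuousLinearMap.adjoint_inner_right]
      have t2 : (inner ℂ (z g') (y ((star b') g)) : ℂ)
          = inner ℂ (b' g') (((ContinuousLinearMap.adjoint z) ∘L y) g) := by
        have h2 : (ContinuousLinearMap.adjoint z) (y ((star b') g))
            = (star b') (((ContinuousLinearMap.adjoint z) ∘L y) g) := by
          have h3 := ContinuousLinearMap.ext_iff.1 hcomm g
          simpa [ContinuousLinearMap.mul_apply] using h3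
        rw [← ContinuousLinearMap.adjoint_inner_right z, h2,
          ContinuousLinearMap.star_eq_adjoint, ContinuousLinearMap.adjoint_inner_right]
      rw [t1, t2, sub_self]
    have hstaradj : ContinuousLinearMap.adjoint (star b') = b' := by
      rw [ContinuousLinearMap.star_eq_adjoint, ContinuousLinearMap.adjoint_adjoint]
    have e2 : b' ∘L (ContinuousLinearMap.adjoint y)
        = (ContinuousLinearMap.adjoint y) ∘L c := by
      have h1 := congrArg ContinuousLinearMap.adjoint key
      rw [ContinuousLinearMap.adjoint_comp, ContinuousLinearMap.adjoint_comp,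
        ContinuousLinearMap.adjoint_adjoint, hstaradj] at h1
      exact h1.symm
    have e4 : c ∘L a = a ∘L c := by
      apply ContinuousLinearMap.ext_on hE.dense
      rintro w ⟨z, hz, g, rfl⟩
      have h1 : a ∘L z ∈ E := (ha z hz).1
      have h2 := ContinuousLinearMap.ext_iff.1 (hc (a ∘L z) h1) g
      have h4 := ContinuousLinearMap.ext_iff.1 (hc z hz) g
      simp only [ContinuousLinearMap.coe_comp', Function.comp_apply] at h2 h4 ⊢
      rw [h2, h4]
    rw [blockOp_mul, blockOp_mul]
    simp only [ContinuousLinearMap.comp_zero, ContinuousLinearMap.zero_comp,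
      add_zero, zero_add]
    rw [e1, e2, e3, e4]
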